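/- Let p and q be probability distributions on a finite set with p_i ≥ τ for all i, for some 0 < τ ≤ 1/3. Then ∑_i (log p_i − log q_i)² ≤ (12 (log τ)² / τ) · KL(p‖q) + (9/τ²) · KL(p‖q)², where KL(p‖q) = ∑_i p_i log(p_i/q_i). -/

import Mathlib

lemma key_pt (x A : ℝ) (hA : 6 ≤ A) :
    x^2 ≤ A * (Real.exp x - 1 - x) + 9 * (Real.exp x - 1 - x)^2 := by
  have hg : 0 ≤ Real.exp x - 1 - x := by nlinarith [Real.add_one_le_exp x]
  rcases le_or_gt (-2) x with h | h
  · have h1 : x/2 + 1 ≤ Real.exp (x/2) := Real.add_one_le_exp _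
    have hx2 : (0:ℝ) ≤ x/2 + 1 := by linarith
    have h2 : (x/2 + 1) * (x/2 + 1) ≤ Real.exp (x/2) * Real.exp (x/2) :=
      mul_self_le_mul_self hx2 h1
    have h3 : Real.exp (x/2) * Real.exp (x/2) = Real.exp x := by
      rw [← Real.exp_add]; ring_nf
    nlinarith [sq_nonneg (Real.exp x - 1 - x), mul_le_mul_of_nonneg_right hA hg]
  · have h1 : (0:ℝ) ≤ -1 - x := by linarith
    have h2 : -1 - x ≤ Real.exp x - 1 - x := by nlinarith [Real.exp_pos x]
    have h3 : (-1 - x) * (-1 - x) ≤ (Real.exp x - 1 - x) * (Real.exp x - 1 - x) :=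
      mul_self_le_mul_self h1 h2
    nlinarith [mul_nonneg (by linarith : (0:ℝ) ≤ A) hg]

lemma scale_pt (x G P τ L F : ℝ) (hτ0 : 0 < τ) (hG0 : 0 ≤ G) (hP : τ ≤ P)
    (hk : x^2 ≤ 12 * L^2 * G + 9 * G^2) (hF : F = P * G) :
    x^2 ≤ 12 * L^2 / τ * F + 9 / τ^2 * F^2 := by
  have h1 : 12 * L^2 * G ≤ 12 * L^2 / τ * F := by
    rw [hF, div_mul_eq_mul_div, le_div_iff₀ hτ0]
    nlinarith [sq_nonneg L, mul_le_mul_of_nonneg_right hP hG0]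
  have h2 : 9 * G^2 ≤ 9 / τ^2 * F^2 := by
    rw [hF, div_mul_eq_mul_div, le_div_iff₀ (by positivity : (0:ℝ) < τ^2)]
    nlinarith [mul_self_le_mul_self (mul_nonneg hτ0.le hG0)
      (mul_le_mul_of_nonneg_right hP hG0)]
  linarith

theorem log_sq_sum_le_kl_of_p_tau_bounded {d : ℕ} (p q : Fin d → ℝ) (τ : ℝ)
    (hτ0 : 0 < τ) (hτ : τ ≤ 1/3)
    (hp1 : ∑ i, p i = 1) (hq1 : ∑ i, q i = 1)
    (hp : ∀ i, τ ≤ p i) (hq : ∀ i, 0 < q i) :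
    ∑ i, (Real.log (p i) - Real.log (q i))^2 ≤
      12 * (Real.log τ)^2 / τ * (∑ i, p i * Real.log (p i / q i)) +
      9 / τ^2 * (∑ i, p i * Real.log (p i / q i))^2 := by
  have hpi : ∀ i, 0 < p i := fun i => lt_of_lt_of_le hτ0 (hp i)
  have hexp3 : Real.exp 1 ≤ 3 := by nlinarith [Real.exp_one_lt_d9]
  have hτe : τ ≤ Real.exp (-1) := by
    rw [Real.exp_neg]
    calc τ ≤ 1/3 := hτ
      _ ≤ (Real.exp 1)⁻¹ := by
          rw [one_div, inv_le_inv₀ (by norm_num) (Real.exp_pos 1)]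
          exact hexp3
  have hlogτ : Real.log τ ≤ -1 := by
    calc Real.log τ ≤ Real.log (Real.exp (-1)) := Real.log_le_log hτ0 hτe
      _ = -1 := Real.log_exp _
  have hA : (6:ℝ) ≤ 12 * (Real.log τ)^2 := by nlinarith
  have hlog : ∀ i, Real.log (p i / q i) = Real.log (p i) - Real.log (q i) :=
    fun i => Real.log_div (hpi i).ne' (hq i).ne'
  have hG : ∀ i, 0 ≤ q i / p i - 1 + (Real.log (p i) - Real.log (q i)) := by
    intro i
    have hx : Real.exp (-(Real.log (p i) - Real.log (q i))) = q i / p i := by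
      rw [show -(Real.log (p i) - Real.log (q i)) = Real.log (q i) - Real.log (p i) by ring,
        ← Real.log_div (hq i).ne' (hpi i).ne', Real.exp_log (div_pos (hq i) (hpi i))]
    nlinarith [Real.add_one_le_exp (-(Real.log (p i) - Real.log (q i)))]
  have hfi : ∀ i, p i * Real.log (p i / q i) - p i + q i =
      p i * (q i / p i - 1 + (Real.log (p i) - Real.log (q i))) := by
    intro i
    have h4 : p i * (q i / p i) = q i := by
      field_simp
      exact mul_div_cancel_left₀ _ (hpi i).ne'
    rw [hlog i]
    linear_combination -h4
  have hf0 : ∀ i, 0 ≤ p i * Real.log (p i / q i) - p i + q i := by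
    intro i
    rw [hfi i]
    exact mul_nonneg (hpi i).le (hG i)
  have hpt : ∀ i, (Real.log (p i) - Real.log (q i))^2 ≤
      12 * (Real.log τ)^2 / τ * (p i * Real.log (p i / q i) - p i + q i) +
      9 / τ^2 * (p i * Real.log (p i / q i) - p i + q i)^2 := by
    intro i
    have hx : Real.exp (-(Real.log (p i) - Real.log (q i))) = q i / p i := by
      rw [show -(Real.log (p i) - Real.log (q i)) = Real.log (q i) - Real.log (p i) by ring,
        ← Real.log_div (hq i).ne' (hpi i).ne', Real.exp_log (div_pos (hq i) (hpi i))]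
    have hkey := key_pt (-(Real.log (p i) - Real.log (q i))) (12 * (Real.log τ)^2) hA
    rw [hx] at hkey
    have hkey' : (Real.log (p i) - Real.log (q i))^2 ≤
        12 * (Real.log τ)^2 * (q i / p i - 1 + (Real.log (p i) - Real.log (q i))) +
        9 * (q i / p i - 1 + (Real.log (p i) - Real.log (q i)))^2 := by nlinarith [hkey]
    exact scale_pt _ _ _ _ _ _ hτ0 (hG i) (hp i) hkey' (hfi i)
  have hsumf : ∑ i, (p i * Real.log (p i / q i) - p i + q i) =
      ∑ i, p i * Real.log (p i / q i) := by
    rw [Finset.sum_add_distrib, Finset.sum_sub_distrib, hp1, hq1]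
    ring
  have hsumsq : ∑ i, (p i * Real.log (p i / q i) - p i + q i)^2 ≤
      (∑ i, (p i * Real.log (p i / q i) - p i + q i))^2 :=
    Finset.sum_sq_le_sq_sum_of_nonneg (fun i _ => hf0 i)
  calc ∑ i, (Real.log (p i) - Real.log (q i))^2
      ≤ ∑ i, (12 * (Real.log τ)^2 / τ * (p i * Real.log (p i / q i) - p i + q i) +
          9 / τ^2 * (p i * Real.log (p i / q i) - p i + q i)^2) :=
        Finset.sum_le_sum (fun i _ => hpt i)
    _ = 12 * (Real.log τ)^2 / τ * (∑ i, (p i * Real.log (p i / q i) - p i + q i)) +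
        9 / τ^2 * (∑ i, (p i * Real.log (p i / q i) - p i + q i)^2) := by
        rw [Finset.sum_add_distrib, ← Finset.mul_sum, ← Finset.mul_sum]
    _ ≤ 12 * (Real.log τ)^2 / τ * (∑ i, (p i * Real.log (p i / q i) - p i + q i)) +
        9 / τ^2 * (∑ i, (p i * Real.log (p i / q i) - p i + q i))^2 := by
        have h9 : (0:ℝ) ≤ 9 / τ^2 := by positivity
        have := mul_le_mul_of_nonneg_left hsumsq h9
        linarith
    _ = 12 * (Real.log τ)^2 / τ * (∑ i, p i * Real.log (p i / q i)) +
        9 / τ^2 * (∑ i, p i * Real.log (p i / q i))^2 := by rw [hsumf]
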